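/- Let N = 1, s = 1/2, Ω = (−1,1), and define u₁(x) = (1/π)(√(1−x²) − x² log|x| + x² log(1 + √(1−x²))) for |x| < 1 and v₁(x) = √(1−x²) − u₁(x). Then lim_{x→1⁻} u₁(x)/√(1−x²) = 2/π and lim_{x→1⁻} v₁(x)/√(1−x²) = (π−2)/π; in particular 2/π > (π−2)/π, so u₁(x) > v₁(x) for x in some left neighborhood of 1. -/

import Mathlib

open Real Filter

/-- The explicit solution of `(−Δ)^{1/2} u = |x|` on `(−1,1)`. -/
noncomputable def uOne (x : ℝ) : ℝ :=
  (1 / π) * (Real.sqrt (1 - x ^ 2) - x ^ 2 * Real.log |x| +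
    x ^ 2 * Real.log (1 + Real.sqrt (1 - x ^ 2)))

/-- The solution of the symmetrized problem `(−Δ)^{1/2} v = 1 − |x|` on `(−1,1)`. -/
noncomputable def vOne (x : ℝ) : ℝ := Real.sqrt (1 - x ^ 2) - uOne x

noncomputable def sOne (x : ℝ) : ℝ := Real.sqrt (1 - x ^ 2)

lemma sOne_tendsto : Tendsto sOne (nhdsWithin 1 (Set.Iio 1)) (nhds 0) := by
  have h : ContinuousAt sOne 1 := by
    unfold sOne; fun_prop
  have := h.continuousWithinAt (s := Set.Iio 1)
  have h2 : sOne 1 = 0 := by simp [sOne]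
  simpa [ContinuousWithinAt, h2] using this

lemma slope_log_tendsto : Tendsto (slope Real.log 1) (nhdsWithin 1 {(1:ℝ)}ᶜ) (nhds 1) := by
  have h := Real.hasDerivAt_log (one_ne_zero)
  rw [hasDerivAt_iff_tendsto_slope] at h
  simpa using h

lemma ev_mem : ∀ᶠ x in nhdsWithin 1 (Set.Iio 1), x ∈ Set.Ioo (0:ℝ) 1 := by
  have h1 : Set.Ioi (0:ℝ) ∈ nhdsWithin 1 (Set.Iio 1) :=
    nhdsWithin_le_nhds (Ioi_mem_nhds one_pos)
  have h2 : Set.Iio (1:ℝ) ∈ nhdsWithin 1 (Set.Iio 1) := self_mem_nhdsWithin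
  filter_upwards [h1, h2] with x hx1 hx2
  exact ⟨hx1, hx2⟩

lemma sOne_pos {x : ℝ} (hx : x ∈ Set.Ioo (0:ℝ) 1) : 0 < sOne x := by
  have : 0 < 1 - x ^ 2 := by nlinarith [hx.1, hx.2]
  exact Real.sqrt_pos.mpr this

lemma sOne_sq {x : ℝ} (hx : x ∈ Set.Ioo (0:ℝ) 1) : sOne x ^ 2 = 1 - x ^ 2 := by
  have : 0 ≤ 1 - x ^ 2 := by nlinarith [hx.1, hx.2]
  exact Real.sq_sqrt this

lemma key_algebra (x s L1 L2 : ℝ) (hs : s ≠ 0) (hsq : s ^ 2 = 1 - x ^ 2)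
    (h1x : (1:ℝ) + x ≠ 0) (hx1' : x - 1 ≠ 0) :
    (1/π) * (s - x ^ 2 * L1 + x ^ 2 * L2) / s
      = (1/π) * (1 + x ^ 2 * ((L2 - Real.log 1)/(1 + s - 1)
        + (L1 - Real.log 1)/(x - 1) * (s/(1 + x)))) := by
  rw [Real.log_one]
  field_simp
  rw [add_sub_cancel_left]
  field_simp
  linear_combination (-x ^ 2 * L1) * hsq

theorem counterexample_boundary_asymptotics :
    Tendsto (fun x => uOne x / Real.sqrt (1 - x ^ 2))
      (nhdsWithin 1 (Set.Iio 1)) (nhds (2 / π)) ∧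
    Tendsto (fun x => vOne x / Real.sqrt (1 - x ^ 2))
      (nhdsWithin 1 (Set.Iio 1)) (nhds ((π - 2) / π)) ∧
    (π - 2) / π < 2 / π ∧
    ∃ ε : ℝ, 0 < ε ∧ ∀ x ∈ Set.Ioo (1 - ε) 1, vOne x < uOne x := by
  set F := nhdsWithin (1:ℝ) (Set.Iio 1) with hF
  have hA : Tendsto (fun x => slope Real.log 1 (1 + sOne x)) F (nhds 1) := by
    apply slope_log_tendsto.comp
    rw [tendsto_nhdsWithin_iff]
    constructor
    · have : Tendsto (fun x => 1 + sOne x) F (nhds (1 + 0)) :=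
        (tendsto_const_nhds).add sOne_tendsto
      simpa using this
    · filter_upwards [ev_mem] with x hx
      have := sOne_pos hx
      simp only [Set.mem_compl_iff, Set.mem_singleton_iff]
      intro h
      nlinarith
  have hB : Tendsto (fun x => slope Real.log 1 x) F (nhds 1) := by
    apply slope_log_tendsto.mono_left
    apply nhdsWithin_mono
    intro x hx
    simp only [Set.mem_compl_iff, Set.mem_singleton_iff]
    exact ne_of_lt hx
  have hC : Tendsto (fun x => sOne x / (1 + x)) F (nhds 0) := by
    have h2 : Tendsto (fun x : ℝ => 1 + x) F (nhds 2) := by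
      have h3 : ContinuousAt (fun x : ℝ => 1 + x) 1 := by fun_prop
      have h4 := h3.tendsto
      norm_num at h4
      exact h4.mono_left nhdsWithin_le_nhds
    have := sOne_tendsto.div h2 (by norm_num)
    rw [zero_div] at this
    exact this
  have hx2 : Tendsto (fun x : ℝ => x ^ 2) F (nhds 1) := by
    have : Tendsto (fun x : ℝ => x ^ 2) (nhds 1) (nhds 1) := by
      have := (continuous_pow 2).tendsto (1:ℝ)
      simpa using this
    exact this.mono_left nhdsWithin_le_nhds
  have hG : Tendsto (fun x => (1/π) * (1 + x ^ 2 * (slope Real.log 1 (1 + sOne x)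
      + slope Real.log 1 x * (sOne x / (1 + x))))) F
      (nhds ((1/π) * (1 + 1 * (1 + 1 * 0)))) :=
    (tendsto_const_nhds).mul
      ((tendsto_const_nhds).add (hx2.mul (hA.add (hB.mul hC))))
  have hG2 : Tendsto (fun x => (1/π) * (1 + x ^ 2 * (slope Real.log 1 (1 + sOne x)
      + slope Real.log 1 x * (sOne x / (1 + x))))) F (nhds (2/π)) := by
    have h3 : (1/π) * (1 + 1 * (1 + 1 * 0)) = 2/π := by ring
    rwa [h3] at hG
  have hequ : ∀ᶠ x in F, uOne x / Real.sqrt (1 - x ^ 2)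
      = (1/π) * (1 + x ^ 2 * (slope Real.log 1 (1 + sOne x)
        + slope Real.log 1 x * (sOne x / (1 + x)))) := by
    filter_upwards [ev_mem] with x hx
    have hs := sOne_pos hx
    have hsq := sOne_sq hx
    have hx0 := hx.1
    have hx1 := hx.2
    have habs : |x| = x := abs_of_pos hx0
    rw [slope_def_field, slope_def_field]
    unfold uOne sOne at *
    rw [habs]
    exact key_algebra x _ (Real.log x) (Real.log (1 + Real.sqrt (1 - x ^ 2)))
      (ne_of_gt hs) hsq (by linarith) (by intro h; nlinarith)
  have hu : Tendsto (fun x => uOne x / Real.sqrt (1 - x ^ 2)) F (nhds (2/π)) :=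
    Tendsto.congr' (hequ.mono fun x hx => hx.symm) hG2
  have heqv : ∀ᶠ x in F, vOne x / Real.sqrt (1 - x ^ 2)
      = 1 - uOne x / Real.sqrt (1 - x ^ 2) := by
    filter_upwards [ev_mem] with x hx
    have hs := sOne_pos hx
    unfold vOne sOne at *
    rw [sub_div, div_self (ne_of_gt hs)]
  have hv : Tendsto (fun x => vOne x / Real.sqrt (1 - x ^ 2)) F (nhds ((π - 2)/π)) := by
    have h1 := (tendsto_const_nhds (x := (1:ℝ))).sub hu
    have h2 : (1:ℝ) - 2/π = (π - 2)/π := by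
      field_simp
    exact Tendsto.congr' (heqv.mono fun x hx => hx.symm) (by rwa [h2] at h1)
  have hlt : (π - 2) / π < 2 / π := by
    have h := Real.pi_lt_d2
    have h2 := Real.pi_pos
    rw [div_lt_div_iff₀ h2 h2]
    nlinarith
  refine ⟨hu, hv, hlt, ?_⟩
  have hsub : Tendsto (fun x => uOne x / Real.sqrt (1 - x ^ 2)
      - vOne x / Real.sqrt (1 - x ^ 2)) F (nhds (2/π - (π-2)/π)) := hu.sub hv
  have hposlim : (0:ℝ) < 2/π - (π-2)/π := by linarith
  have hev : ∀ᶠ x in F, 0 < uOne x / Real.sqrt (1 - x ^ 2)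
      - vOne x / Real.sqrt (1 - x ^ 2) :=
    hsub.eventually (eventually_gt_nhds hposlim)
  have hfin : ∀ᶠ x in F, vOne x < uOne x := by
    filter_upwards [hev, ev_mem] with x h hx
    have hs := sOne_pos hx
    have h' : vOne x / sOne x < uOne x / sOne x := by
      unfold sOne at *; linarith
    have h2 := mul_lt_mul_of_pos_right h' hs
    rwa [div_mul_cancel₀ _ (ne_of_gt hs), div_mul_cancel₀ _ (ne_of_gt hs)] at h2
  rw [hF, eventually_iff, mem_nhdsLT_iff_exists_Ioo_subset] at hfin
  obtain ⟨l, hl, hsubset⟩ := hfin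
  refine ⟨1 - l, by simp at hl; linarith, fun x hx => ?_⟩
  have hmem : x ∈ Set.Ioo l 1 := ⟨by have := hx.1; linarith, hx.2⟩
  exact hsubset hmem
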